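/- Let $\Omega = (-a,a)^d$, let $w_2 \in L^\infty(\Omega^2,\mathbb{R})$, and let $v_1 : \Omega^2 \to \mathbb{C}$ be measurable such that for some $\varepsilon > 0$ both $\operatorname{esssup}_{x}\|v_1(x,\cdot)\|_{L^{2+\varepsilon}(\Omega)} < \infty$ and $\operatorname{esssup}_{y}\|v_1(\cdot,y)\|_{L^{2+4/\varepsilon}(\Omega)} < \infty$. Then for every $z \in \mathbb{R}$ with $\operatorname{dist}(z, \operatorname{essran}(w_2)) > 0$, the kernel $K(x,y;z) := -\frac{1}{2} \frac{v_1(x,y)\, \overline{v_1(y,x)}}{w_2(x,y) - z}$ belongs to $L^2(\Omega^2)$, i.e., the associated integral operator on $L^2(\Omega)$ is Hilbert–Schmidt. -/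

import Mathlib

open MeasureTheory ENNReal

/-- The essential range of a measurable real-valued function with respect to a measure. -/
def essRange {α : Type*} [MeasurableSpace α] (μ : Measure α) (f : α → ℝ) : Set ℝ :=
  {c : ℝ | ∀ δ > 0, μ {x | |f x - c| < δ} ≠ 0}

/-- Almost every point is mapped into the essential range. -/
lemma ae_mem_essRange {α : Type*} [MeasurableSpace α] (μ : Measure α) (f : α → ℝ) :
    ∀ᵐ x ∂μ, f x ∈ essRange μ f := by
  set S : ℚ × ℚ → Set α := fun q => {x | |f x - (q.1 : ℝ)| < (q.2 : ℝ)} with hS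
  have hnull : μ (⋃ q ∈ {q : ℚ × ℚ | μ (S q) = 0}, S q) = 0 :=
    (measure_biUnion_null_iff (Set.to_countable _)).2 fun q hq => hq
  rw [ae_iff]
  refine measure_mono_null ?_ hnull
  intro x hx
  simp only [Set.mem_setOf_eq, essRange] at hx
  push_neg at hx
  obtain ⟨δ, hδ, h0⟩ := hx
  obtain ⟨r, hr0, hr⟩ := exists_rat_btwn (show (0 : ℝ) < δ / 3 by linarith)
  have hr0' : (0 : ℝ) < (r : ℝ) := hr0
  obtain ⟨q, hq⟩ := exists_rat_near (f x) hr0'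
  refine Set.mem_biUnion (show (q, r) ∈ {q : ℚ × ℚ | μ (S q) = 0} from ?_) ?_
  · show μ (S (q, r)) = 0
    refine measure_mono_null (fun y hy => ?_) h0
    simp only [hS, Set.mem_setOf_eq] at hy ⊢
    have h1 : |f y - f x| ≤ |f y - (q : ℝ)| + |(q : ℝ) - f x| := abs_sub_le _ _ _
    have h2 : |(q : ℝ) - f x| = |f x - (q : ℝ)| := abs_sub_comm _ _
    linarith
  · show x ∈ S (q, r)
    simpa [hS] using hq

/-- Young-type inequality in `ℝ≥0∞`. -/
lemma ennreal_young (a b : ℝ≥0∞) {ε : ℝ} (hε : 0 < ε) :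
    a ^ (2 : ℝ) * b ^ (2 : ℝ) ≤ a ^ (2 + ε) + b ^ (2 + 4 / ε) := by
  rcases le_total (b ^ (2 : ℝ)) (a ^ ε) with h | h
  · calc a ^ (2 : ℝ) * b ^ (2 : ℝ) ≤ a ^ (2 : ℝ) * a ^ ε := mul_le_mul_right h _
      _ = a ^ (2 + ε) := (ENNReal.rpow_add_of_nonneg _ _ (by norm_num) hε.le).symm
      _ ≤ _ := le_self_add
  · have h2 : a ^ (2 : ℝ) ≤ b ^ (4 / ε) := by
      have h3 := ENNReal.rpow_le_rpow h (by positivity : (0 : ℝ) ≤ 2 / ε)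
      rw [← ENNReal.rpow_mul, ← ENNReal.rpow_mul] at h3
      rw [show ε * (2 / ε) = 2 by field_simp, show 2 * (2 / ε) = 4 / ε by ring] at h3
      exact h3
    calc a ^ (2 : ℝ) * b ^ (2 : ℝ) ≤ b ^ (4 / ε) * b ^ (2 : ℝ) := mul_le_mul_left h2 _
      _ = b ^ (4 / ε + 2) := (ENNReal.rpow_add_of_nonneg _ _ (by positivity) (by norm_num)).symm
      _ = b ^ (2 + 4 / ε) := by rw [add_comm]
      _ ≤ _ := le_add_self

theorem schur_kernel_HilbertSchmidt (d : ℕ) (a ε : ℝ) (ha : 0 < a) (hε : 0 < ε)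
    (Ω : Set (Fin d → ℝ)) (hΩ : Ω = Set.univ.pi fun _ => Set.Ioo (-a) a)
    (μ : Measure (Fin d → ℝ)) (hμ : μ = volume.restrict Ω)
    (w₂ : (Fin d → ℝ) × (Fin d → ℝ) → ℝ)
    (hw₂meas : Measurable w₂)
    (hw₂bdd : ∃ M : ℝ, ∀ᵐ p ∂(μ.prod μ), |w₂ p| ≤ M)
    (v₁ : (Fin d → ℝ) → (Fin d → ℝ) → ℂ)
    (hv₁meas : Measurable (Function.uncurry v₁))
    (hv₁x : essSup (fun x => eLpNorm (v₁ x) (ENNReal.ofReal (2 + ε)) μ) μ < ⊤)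
    (hv₁y : essSup (fun y => eLpNorm (fun x => v₁ x y) (ENNReal.ofReal (2 + 4 / ε)) μ) μ < ⊤)
    (z : ℝ) (hz : 0 < Metric.infDist z (essRange (μ.prod μ) w₂))
    (K : (Fin d → ℝ) × (Fin d → ℝ) → ℂ)
    (hK : K = fun p => -(1 / 2) * (v₁ p.1 p.2 * (starRingEnd ℂ) (v₁ p.2 p.1)) /
        ((w₂ p : ℂ) - (z : ℂ))) :
    MemLp K 2 (μ.prod μ) := by
  -- μ is a finite measure
  have hμfin : IsFiniteMeasure μ := by
    constructor
    rw [hμ, Measure.restrict_apply_univ, hΩ, volume_pi_pi]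
    simp only [Real.volume_Ioo, Finset.prod_const]
    exact ENNReal.pow_lt_top ENNReal.ofReal_lt_top
  -- exponents
  set P : ℝ := 2 + ε with hPdef
  set Q : ℝ := 2 + 4 / ε with hQdef
  have hP : (0 : ℝ) < P := by positivity
  have hQ : (0 : ℝ) < Q := by positivity
  -- measurability of pieces
  have hm1 : Measurable fun p : (Fin d → ℝ) × (Fin d → ℝ) => v₁ p.1 p.2 := hv₁meas
  have hm2 : Measurable fun p : (Fin d → ℝ) × (Fin d → ℝ) => v₁ p.2 p.1 :=
    hv₁meas.comp measurable_swap
  have hKmeas : Measurable K := by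
    rw [hK]
    exact (measurable_const.mul (hm1.mul (continuous_star.measurable.comp hm2))).div
      ((Complex.measurable_ofReal.comp hw₂meas).sub measurable_const)
  -- distance to essential range
  set D : ℝ := Metric.infDist z (essRange (μ.prod μ) w₂) with hDdef
  have hD : ∀ᵐ p ∂(μ.prod μ), D ≤ |w₂ p - z| := by
    filter_upwards [ae_mem_essRange (μ.prod μ) w₂] with p hp
    have h1 := Metric.infDist_le_dist_of_mem (x := z) hp
    rwa [Real.dist_eq, abs_sub_comm] at h1
  -- L^r norms on slices
  have key : ∀ (g : (Fin d → ℝ) → ℂ) (r : ℝ), 0 < r →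
      ∫⁻ y, ((‖g y‖₊ : ℝ≥0∞)) ^ r ∂μ = (eLpNorm g (ENNReal.ofReal r) μ) ^ r := by
    intro g r hr
    rw [eLpNorm_eq_lintegral_rpow_enorm_toReal (ENNReal.ofReal_pos.2 hr).ne' ENNReal.ofReal_ne_top,
      ENNReal.toReal_ofReal hr.le, ← ENNReal.rpow_mul, one_div, inv_mul_cancel₀ hr.ne',
      ENNReal.rpow_one]
    rfl
  -- first term is finite
  set S₁ : ℝ≥0∞ := essSup (fun x => eLpNorm (v₁ x) (ENNReal.ofReal P) μ) μ with hS₁def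
  set S₂ : ℝ≥0∞ := essSup (fun y => eLpNorm (fun x => v₁ x y) (ENNReal.ofReal Q) μ) μ with hS₂def
  have hmeasP : Measurable fun p : (Fin d → ℝ) × (Fin d → ℝ) => (‖v₁ p.1 p.2‖₊ : ℝ≥0∞) ^ P :=
    hm1.nnnorm.coe_nnreal_ennreal.pow measurable_const
  have hmeasQ : Measurable fun p : (Fin d → ℝ) × (Fin d → ℝ) => (‖v₁ p.2 p.1‖₊ : ℝ≥0∞) ^ Q :=
    hm2.nnnorm.coe_nnreal_ennreal.pow measurable_const
  have term1 : ∫⁻ p, (‖v₁ p.1 p.2‖₊ : ℝ≥0∞) ^ P ∂(μ.prod μ) < ⊤ := by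
    rw [lintegral_prod _ hmeasP.aemeasurable]
    calc ∫⁻ x, ∫⁻ y, (‖v₁ x y‖₊ : ℝ≥0∞) ^ P ∂μ ∂μ ≤ ∫⁻ _, S₁ ^ P ∂μ := by
          refine lintegral_mono_ae ?_
          filter_upwards [ae_le_essSup (fun x => eLpNorm (v₁ x) (ENNReal.ofReal P) μ)] with x hx
          rw [key (v₁ x) P hP]
          exact ENNReal.rpow_le_rpow hx hP.le
      _ = S₁ ^ P * μ Set.univ := lintegral_const _
      _ < ⊤ := ENNReal.mul_lt_top
          (ENNReal.rpow_lt_top_of_nonneg hP.le hv₁x.ne) (measure_lt_top μ _)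
  have term2 : ∫⁻ p, (‖v₁ p.2 p.1‖₊ : ℝ≥0∞) ^ Q ∂(μ.prod μ) < ⊤ := by
    rw [lintegral_prod _ hmeasQ.aemeasurable]
    calc ∫⁻ x, ∫⁻ y, (‖v₁ y x‖₊ : ℝ≥0∞) ^ Q ∂μ ∂μ ≤ ∫⁻ _, S₂ ^ Q ∂μ := by
          refine lintegral_mono_ae ?_
          filter_upwards [ae_le_essSup
            (fun y => eLpNorm (fun x => v₁ x y) (ENNReal.ofReal Q) μ)] with x hx
          rw [key (fun t => v₁ t x) Q hQ]
          exact ENNReal.rpow_le_rpow hx hQ.le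
      _ = S₂ ^ Q * μ Set.univ := lintegral_const _
      _ < ⊤ := ENNReal.mul_lt_top
          (ENNReal.rpow_lt_top_of_nonneg hQ.le hv₁y.ne) (measure_lt_top μ _)
  -- pointwise bound
  set C : ℝ≥0∞ := (ENNReal.ofReal (1 / (2 * D))) ^ (2 : ℝ) with hCdef
  have hbound : ∀ᵐ p ∂(μ.prod μ), (‖K p‖₊ : ℝ≥0∞) ^ (2 : ℝ) ≤
      C * ((‖v₁ p.1 p.2‖₊ : ℝ≥0∞) ^ P + (‖v₁ p.2 p.1‖₊ : ℝ≥0∞) ^ Q) := by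
    filter_upwards [hD] with p hp
    have hc : ((w₂ p : ℂ) - (z : ℂ)) = ((w₂ p - z : ℝ) : ℂ) := by push_cast; ring
    have hKnorm : ‖K p‖ = (‖v₁ p.1 p.2‖ * ‖v₁ p.2 p.1‖) / (2 * |w₂ p - z|) := by
      rw [hK]
      simp only [norm_div, norm_mul, norm_neg, hc, Complex.norm_real, Real.norm_eq_abs,
        RCLike.norm_conj, norm_one, Complex.norm_ofNat]
      ring
    have hKp : ‖K p‖ ≤ 1 / (2 * D) * (‖v₁ p.1 p.2‖ * ‖v₁ p.2 p.1‖) := by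
      rw [hKnorm, show 1 / (2 * D) * (‖v₁ p.1 p.2‖ * ‖v₁ p.2 p.1‖)
        = (‖v₁ p.1 p.2‖ * ‖v₁ p.2 p.1‖) / (2 * D) by ring]
      have h2D : (0:ℝ) < 2 * D := by positivity
      apply div_le_div_of_nonneg_left (by positivity) h2D (by linarith)
    have hen : (‖K p‖₊ : ℝ≥0∞) ≤
        ENNReal.ofReal (1 / (2 * D)) * ((‖v₁ p.1 p.2‖₊ : ℝ≥0∞) * (‖v₁ p.2 p.1‖₊ : ℝ≥0∞)) := by
      calc (‖K p‖₊ : ℝ≥0∞) = ENNReal.ofReal ‖K p‖ := (ofReal_norm _).symm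
        _ ≤ ENNReal.ofReal (1 / (2 * D) * (‖v₁ p.1 p.2‖ * ‖v₁ p.2 p.1‖)) :=
            ENNReal.ofReal_le_ofReal hKp
        _ = _ := by
            rw [ENNReal.ofReal_mul (by positivity), ENNReal.ofReal_mul (norm_nonneg _),
              ofReal_norm, ofReal_norm, enorm_eq_nnnorm, enorm_eq_nnnorm]
    calc (‖K p‖₊ : ℝ≥0∞) ^ (2 : ℝ)
        ≤ (ENNReal.ofReal (1 / (2 * D)) *
            ((‖v₁ p.1 p.2‖₊ : ℝ≥0∞) * (‖v₁ p.2 p.1‖₊ : ℝ≥0∞))) ^ (2 : ℝ) :=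
          ENNReal.rpow_le_rpow hen (by norm_num)
      _ = C * ((‖v₁ p.1 p.2‖₊ : ℝ≥0∞) ^ (2 : ℝ) * (‖v₁ p.2 p.1‖₊ : ℝ≥0∞) ^ (2 : ℝ)) := by
          rw [ENNReal.mul_rpow_of_nonneg _ _ (by norm_num : (0:ℝ) ≤ 2),
            ENNReal.mul_rpow_of_nonneg _ _ (by norm_num : (0:ℝ) ≤ 2)]
      _ ≤ C * ((‖v₁ p.1 p.2‖₊ : ℝ≥0∞) ^ P + (‖v₁ p.2 p.1‖₊ : ℝ≥0∞) ^ Q) :=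
          mul_le_mul_right (ennreal_young _ _ hε) _
  have hCne : C ≠ ⊤ :=
    (ENNReal.rpow_lt_top_of_nonneg (by norm_num) ENNReal.ofReal_ne_top).ne
  -- total integral is finite
  have hI : ∫⁻ p, (‖K p‖₊ : ℝ≥0∞) ^ (2 : ℝ) ∂(μ.prod μ) < ⊤ := by
    calc ∫⁻ p, (‖K p‖₊ : ℝ≥0∞) ^ (2 : ℝ) ∂(μ.prod μ)
        ≤ ∫⁻ p, C * ((‖v₁ p.1 p.2‖₊ : ℝ≥0∞) ^ P + (‖v₁ p.2 p.1‖₊ : ℝ≥0∞) ^ Q) ∂(μ.prod μ) :=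
          lintegral_mono_ae hbound
      _ = C * ∫⁻ p, ((‖v₁ p.1 p.2‖₊ : ℝ≥0∞) ^ P + (‖v₁ p.2 p.1‖₊ : ℝ≥0∞) ^ Q) ∂(μ.prod μ) :=
          lintegral_const_mul' _ _ hCne
      _ = C * ((∫⁻ p, (‖v₁ p.1 p.2‖₊ : ℝ≥0∞) ^ P ∂(μ.prod μ)) +
            ∫⁻ p, (‖v₁ p.2 p.1‖₊ : ℝ≥0∞) ^ Q ∂(μ.prod μ)) := by
          rw [lintegral_add_left hmeasP]
      _ < ⊤ := ENNReal.mul_lt_top hCne.lt_top (ENNReal.add_lt_top.2 ⟨term1, term2⟩)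
  refine ⟨hKmeas.aestronglyMeasurable, ?_⟩
  rw [eLpNorm_eq_lintegral_rpow_enorm_toReal (by norm_num) (by norm_num)]
  refine ENNReal.rpow_lt_top_of_nonneg (by positivity) ?_
  simpa [enorm_eq_nnnorm] using hI.ne
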